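/- Let ξ₁,…,ξ_k be nonzero vectors in ℝ², ordered anticlockwise, satisfying: (i) no two of the vectors are linearly dependent; (ii) there is no ω ∈ ℝ² with ⟨ω,ξᵢ⟩ > 0 for all i. Then for any real numbers f(ξ₁),…,f(ξ_k), min_{γ∈ℝ²} max_{i=1,…,k} [f(ξᵢ) − ⟨ξᵢ,γ⟩] = max_{(i,j,m)} (pᵢ^{ijm} f(ξᵢ) + p_j^{ijm} f(ξ_j) + p_m^{ijm} f(ξ_m)), where the maximum is taken over all triples 1 ≤ i < j < m ≤ k such that the origin lies in the interior of conv{ξᵢ,ξ_j,ξ_m}, and {pᵢ^{ijm}, p_j^{ijm}, p_m^{ijm}} is the unique risk-neutral probability law on {ξᵢ, ξ_j, ξ_m}. -/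

import Mathlib

noncomputable section

/-- Standard inner product on ℝ². -/
def dotp2 (u v : Fin 2 → ℝ) : ℝ := u 0 * v 0 + u 1 * v 1

open Finset

section Helpers

lemma dotp2_comm (u v : Fin 2 → ℝ) : dotp2 u v = dotp2 v u := by simp [dotp2]; ring

lemma dotp2_zero_right (v : Fin 2 → ℝ) : dotp2 v 0 = 0 := by simp [dotp2]

lemma dotp2_smul_right (c : ℝ) (u v : Fin 2 → ℝ) : dotp2 u (c • v) = c * dotp2 u v := by
  simp [dotp2]; ring

lemma dotp2_self_pos {v : Fin 2 → ℝ} (hv : v ≠ 0) : 0 < dotp2 v v := by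
  rcases (by
    by_contra h
    push_neg at h
    exact hv (funext fun i => by fin_cases i <;> simp [h.1, h.2]) : v 0 ≠ 0 ∨ v 1 ≠ 0) with h | h
  · simp only [dotp2]; nlinarith [mul_self_pos.2 h, mul_self_nonneg (v 1)]
  · simp only [dotp2]; nlinarith [mul_self_pos.2 h, mul_self_nonneg (v 0)]

lemma dotp2_continuous (x : Fin 2 → ℝ) : Continuous (dotp2 x) := by
  unfold dotp2
  exact ((continuous_const.mul (continuous_apply 0)).add
    (continuous_const.mul (continuous_apply 1)))

/-- A vector orthogonal to a nonzero `u` is a multiple of the rotation of `u`. -/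
lemma orth_mul {x u : Fin 2 → ℝ} (hu : u ≠ 0) (h : dotp2 x u = 0) :
    ∃ c : ℝ, x = c • ![-u 1, u 0] := by
  have hu' : u 0 ≠ 0 ∨ u 1 ≠ 0 := by
    by_contra hc; push_neg at hc
    exact hu (funext fun i => by fin_cases i <;> simp [hc.1, hc.2])
  simp only [dotp2] at h
  rcases hu' with h0 | h1
  · refine ⟨x 1 / u 0, funext fun i => ?_⟩
    fin_cases i <;> simp [Matrix.cons_val_zero, Matrix.cons_val_one] <;> field_simp <;> nlinarith
  · refine ⟨-(x 0) / u 1, funext fun i => ?_⟩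
    fin_cases i <;> simp [Matrix.cons_val_zero, Matrix.cons_val_one] <;> field_simp <;> nlinarith

lemma not_li_of_smul {x y v : Fin 2 → ℝ} {c d : ℝ} (hx : x = c • v) (hy : y = d • v)
    (hy0 : y ≠ 0) : ¬ LinearIndependent ℝ ![x, y] := by
  intro h
  rw [linearIndependent_fin2] at h
  have hd : d ≠ 0 := by rintro rfl; simp at hy; exact hy0 (by simp [hy])
  exact h.2 (c / d) (by
    simp only [Matrix.cons_val_one, Matrix.head_cons, Matrix.cons_val_zero, hx, hy, smul_smul]
    rw [div_mul_cancel₀ _ hd])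

lemma range_triple {α : Type*} (x y z : α) : Set.range ![x, y, z] = ({x, y, z} : Set α) := by
  ext w
  simp [Matrix.range_cons, Matrix.range_cons_empty]
  tauto

variable {k : ℕ} {ξ : Fin k → (Fin 2 → ℝ)}

lemma exists_pos_dot [NeZero k]
    (hne : ∀ i, ξ i ≠ 0)
    (hi : ∀ i j : Fin k, i ≠ j → LinearIndependent ℝ ![ξ i, ξ j])
    (hii : ¬ ∃ ω : Fin 2 → ℝ, ∀ i, 0 < dotp2 ω (ξ i))
    (u : Fin 2 → ℝ) (hu : u ≠ 0) : ∃ i, 0 < dotp2 (ξ i) u := by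
  by_contra hcon
  push_neg at hcon
  by_cases hz : ∃ a, dotp2 (ξ a) u = 0
  · obtain ⟨a, ha⟩ := hz
    have huniq : ∀ i, i ≠ a → dotp2 (ξ i) u < 0 := by
      intro i hia
      rcases lt_or_eq_of_le (hcon i) with h | h
      · exact h
      · exfalso
        obtain ⟨c, hc⟩ := orth_mul hu h
        obtain ⟨d, hd⟩ := orth_mul hu ha
        exact not_li_of_smul hc hd (hne a) (hi i a hia)
    set w := ξ a with hw
    have hεf : ∀ i : Fin k,
        0 < (if i = a then (1:ℝ) else (-(dotp2 (ξ i) u)) / (|dotp2 w (ξ i)| + 1)) := by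
      intro i
      by_cases h : i = a
      · simp [h]
      · simp only [h, if_false]
        exact div_pos (by linarith [huniq i h]) (by positivity)
    set ε := univ.inf' univ_nonempty
      (fun i : Fin k => if i = a then (1:ℝ) else (-(dotp2 (ξ i) u)) / (|dotp2 w (ξ i)| + 1))
      with hε
    have hεpos : 0 < ε := by
      rw [hε, Finset.lt_inf'_iff]
      exact fun i _ => hεf i
    refine hii ⟨-u + ε • w, fun i => ?_⟩
    have hsplit : dotp2 (-u + ε • w) (ξ i) = -(dotp2 (ξ i) u) + ε * dotp2 w (ξ i) := by
      rw [dotp2_comm]; simp [dotp2]; ring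
    rw [hsplit]
    by_cases h : i = a
    · subst h
      rw [ha]
      simpa using mul_pos hεpos (dotp2_self_pos (hne i))
    · have hβ : 0 < -(dotp2 (ξ i) u) := by linarith [huniq i h]
      have hle : ε ≤ (-(dotp2 (ξ i) u)) / (|dotp2 w (ξ i)| + 1) := by
        rw [hε]
        refine Finset.inf'_le_of_le _ (Finset.mem_univ i) ?_
        simp [h]
      have habs : ε * |dotp2 w (ξ i)| < -(dotp2 (ξ i) u) := by
        calc ε * |dotp2 w (ξ i)|
            ≤ ((-(dotp2 (ξ i) u)) / (|dotp2 w (ξ i)| + 1)) * |dotp2 w (ξ i)| :=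
              mul_le_mul_of_nonneg_right hle (abs_nonneg _)
          _ < -(dotp2 (ξ i) u) := by
              rw [div_mul_eq_mul_div, div_lt_iff₀ (by positivity)]
              nlinarith [abs_nonneg (dotp2 w (ξ i))]
      have := neg_abs_le (dotp2 w (ξ i))
      nlinarith [hεpos.le, mul_le_mul_of_nonneg_left this hεpos.le]
  · push_neg at hz
    refine hii ⟨-u, fun i => ?_⟩
    have h' : dotp2 (-u) (ξ i) = -(dotp2 (ξ i) u) := by rw [dotp2_comm]; simp [dotp2]; ring
    rw [h']
    rcases lt_or_eq_of_le (hcon i) with h | h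
    · linarith
    · exact absurd h (hz i)

lemma sup'_smul_nonneg {t : ℝ} (ht : 0 ≤ t) (g : Fin k → ℝ) [NeZero k] :
    univ.sup' univ_nonempty (fun i => t * g i) = t * univ.sup' univ_nonempty g :=
  (Finset.comp_sup'_eq_sup'_comp univ_nonempty (fun x => t * x)
    (fun x y => by exact mul_max_of_nonneg x y ht)).symm

lemma coercive_const [NeZero k]
    (hpos : ∀ u : Fin 2 → ℝ, u ≠ 0 → ∃ i, 0 < dotp2 (ξ i) u) :
    ∃ c : ℝ, 0 < c ∧ ∀ v : Fin 2 → ℝ,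
      c * ‖v‖ ≤ univ.sup' univ_nonempty (fun i => dotp2 (ξ i) v) := by
  set m : (Fin 2 → ℝ) → ℝ := fun v => univ.sup' univ_nonempty (fun i => dotp2 (ξ i) v) with hm
  have hmc : Continuous m := by
    have h : ∀ i : Fin k, Continuous fun v => dotp2 (ξ i) v := fun i => dotp2_continuous _
    exact continuous_iff_continuousAt.2 fun x =>
      (Filter.Tendsto.finset_sup'_nhds_apply univ_nonempty (fun i _ => ((h i).tendsto x)))
  have hsph : IsCompact (Metric.sphere (0 : Fin 2 → ℝ) 1) := isCompact_sphere _ _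
  have hsne : (Metric.sphere (0 : Fin 2 → ℝ) 1).Nonempty :=
    NormedSpace.sphere_nonempty.2 zero_le_one
  obtain ⟨u₀, hu₀s, hu₀min⟩ := hsph.exists_isMinOn hsne hmc.continuousOn
  have hu₀ : u₀ ≠ 0 := by
    intro h
    have h2 := mem_sphere_zero_iff_norm.1 hu₀s
    rw [h] at h2; simp at h2
  obtain ⟨i₀, hi₀⟩ := hpos u₀ hu₀
  have hc : 0 < m u₀ :=
    lt_of_lt_of_le hi₀ (Finset.le_sup' (fun i => dotp2 (ξ i) u₀) (mem_univ i₀))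
  refine ⟨m u₀, hc, fun v => ?_⟩
  rcases eq_or_ne v 0 with rfl | hv
  · simp [hm, dotp2_zero_right]
  · have hnv : (0:ℝ) < ‖v‖ := norm_pos_iff.2 hv
    have husph : ‖v‖⁻¹ • v ∈ Metric.sphere (0 : Fin 2 → ℝ) 1 := by
      simp [norm_smul, abs_of_pos (inv_pos.2 hnv), inv_mul_cancel₀ hnv.ne']
    have h1 : m u₀ ≤ m (‖v‖⁻¹ • v) := hu₀min husph
    have h2 : m (‖v‖⁻¹ • v) = ‖v‖⁻¹ * m v := by
      rw [hm]
      simp only [dotp2_smul_right]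
      exact sup'_smul_nonneg (inv_pos.2 hnv).le _
    rw [h2] at h1
    calc m u₀ * ‖v‖ ≤ (‖v‖⁻¹ * m v) * ‖v‖ := mul_le_mul_of_nonneg_right h1 hnv.le
      _ = m v := by field_simp

lemma interior_triple {x y z : Fin 2 → ℝ} (hy0 : y ≠ 0) (hLI : LinearIndependent ℝ ![x, y])
    {pa pb pc : ℝ} (hpa : 0 < pa) (hpb : 0 < pb) (hpc : 0 < pc)
    (hsum : pa + pb + pc = 1) (hcombo : pa • x + pb • y + pc • z = 0) :
    (0 : Fin 2 → ℝ) ∈ interior (convexHull ℝ ({x, y, z} : Set (Fin 2 → ℝ))) := by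
  have hAI : AffineIndependent ℝ ![x, y, z] := by
    rw [affineIndependent_iff_not_collinear, range_triple]
    intro hcol
    have hmem : x ∈ ({x, y, z} : Set (Fin 2 → ℝ)) := by simp
    obtain ⟨v, hv⟩ := (collinear_iff_of_mem hmem).1 hcol
    obtain ⟨tb, htb⟩ := hv y (by simp)
    obtain ⟨tc, htc⟩ := hv z (by simp)
    rw [vadd_eq_add] at htb htc
    have e := hcombo
    rw [htb, htc] at e
    have hx' : x = (-(pb * tb + pc * tc)) • v := by
      funext j
      have ej := congrFun e j
      simp only [Pi.add_apply, Pi.smul_apply, smul_eq_mul, Pi.zero_apply] at ej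
      simp only [Pi.smul_apply, smul_eq_mul]
      linear_combination ej - x j * hsum
    have hy' : y = (tb - (pb * tb + pc * tc)) • v := by
      rw [htb, hx']
      funext j
      simp only [Pi.add_apply, Pi.smul_apply, smul_eq_mul]
      ring
    exact not_li_of_smul hx' hy' hy0 hLI
  have htop : affineSpan ℝ (Set.range ![x, y, z]) = ⊤ := by
    rw [hAI.affineSpan_eq_top_iff_card_eq_finrank_add_one]
    simp [Module.finrank_fin_fun]
  let B : AffineBasis (Fin 3) ℝ (Fin 2 → ℝ) := ⟨![x, y, z], hAI, htop⟩
  have hrange : Set.range (B : Fin 3 → (Fin 2 → ℝ)) = ({x, y, z} : Set (Fin 2 → ℝ)) := by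
    have h : Set.range (B : Fin 3 → (Fin 2 → ℝ)) = Set.range ![x, y, z] := rfl
    rw [h, range_triple]
  have hw : ∑ j, (![pa, pb, pc]) j = 1 := by
    simp [Fin.sum_univ_three]; linarith
  have hco : Finset.univ.affineCombination ℝ (B : Fin 3 → (Fin 2 → ℝ)) ![pa, pb, pc] = 0 := by
    rw [Finset.affineCombination_eq_linear_combination _ _ _ hw]
    simp [Fin.sum_univ_three, add_assoc]
    exact (show pa • x + (pb • y + pc • z) = 0 by rw [← add_assoc]; exact hcombo)
  have hcoord : ∀ j, B.coord j (0 : Fin 2 → ℝ) = ![pa, pb, pc] j := by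
    intro j
    rw [← hco, B.coord_apply_combination_of_mem (Finset.mem_univ j) hw]
  rw [← hrange, B.interior_convexHull]
  intro j
  rw [hcoord]
  fin_cases j <;> simpa

/-- Sorting a triple with symmetric payload. -/
lemma sort3 {α : Type*} [LinearOrder α] {a b c : α} (hab : a ≠ b) (hac : a ≠ c) (hbc : b ≠ c)
    {P : α → α → α → ℝ → ℝ → ℝ → Prop}
    (hswap12 : ∀ x y z p q r, P x y z p q r → P y x z q p r)
    (hswap23 : ∀ x y z p q r, P x y z p q r → P x z y p r q)
    {p q r : ℝ} (h : P a b c p q r) :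
    ∃ x y z : α, x < y ∧ y < z ∧ ∃ p' q' r' : ℝ, P x y z p' q' r' := by
  rcases hab.lt_or_gt with h1 | h1
  · rcases hbc.lt_or_gt with h2 | h2
    · exact ⟨a, b, c, h1, h2, p, q, r, h⟩
    · rcases hac.lt_or_gt with h3 | h3
      · exact ⟨a, c, b, h3, h2, p, r, q, hswap23 _ _ _ _ _ _ h⟩
      · exact ⟨c, a, b, h3, h1, r, p, q, hswap12 _ _ _ _ _ _ (hswap23 _ _ _ _ _ _ h)⟩
  · rcases hac.lt_or_gt with h3 | h3
    · exact ⟨b, a, c, h1, h3, q, p, r, hswap12 _ _ _ _ _ _ h⟩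
    · rcases hbc.lt_or_gt with h2 | h2
      · exact ⟨b, c, a, h2, h3, q, r, p, hswap23 _ _ _ _ _ _ (hswap12 _ _ _ _ _ _ h)⟩
      · exact ⟨c, b, a, h2, h1, r, q, p,
          hswap12 _ _ _ _ _ _ (hswap23 _ _ _ _ _ _ (hswap12 _ _ _ _ _ _ h))⟩

end Helpers

theorem stmt2 (k : ℕ) (ξ : Fin k → (Fin 2 → ℝ)) (f : Fin k → ℝ)
    (hne : ∀ i, ξ i ≠ 0)
    -- the vectors are ordered anticlockwise: their polar angles are strictly
    -- increasing within one full turn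
    (hord : ∃ (θ : Fin k → ℝ) (r : Fin k → ℝ), (∀ i, 0 < r i) ∧ StrictMono θ ∧
      (∀ i j, θ j < θ i + 2 * Real.pi) ∧
      ∀ i, ξ i = r i • ![Real.cos (θ i), Real.sin (θ i)])
    -- (i): no two of the vectors are linearly dependent
    (hi : ∀ i j : Fin k, i ≠ j → LinearIndependent ℝ ![ξ i, ξ j])
    -- (ii): no ω has positive inner product with all the ξᵢ
    (hii : ¬ ∃ ω : Fin 2 → ℝ, ∀ i, 0 < dotp2 ω (ξ i)) :
    ∃ V : ℝ,
      IsLeast (Set.range fun γ : Fin 2 → ℝ => ⨆ i, (f i - dotp2 (ξ i) γ)) V ∧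
      IsGreatest { y : ℝ | ∃ i j m : Fin k, i < j ∧ j < m ∧
        (0 : Fin 2 → ℝ) ∈ interior (convexHull ℝ ({ξ i, ξ j, ξ m} : Set (Fin 2 → ℝ))) ∧
        ∃ p₁ p₂ p₃ : ℝ, 0 ≤ p₁ ∧ 0 ≤ p₂ ∧ 0 ≤ p₃ ∧ p₁ + p₂ + p₃ = 1 ∧
          p₁ • ξ i + p₂ • ξ j + p₃ • ξ m = 0 ∧
          y = p₁ * f i + p₂ * f j + p₃ * f m } V := by
  classical
  have hk : k ≠ 0 := by rintro rfl; exact hii ⟨0, fun i => i.elim0⟩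
  haveI : NeZero k := ⟨hk⟩
  haveI : Nonempty (Fin k) := ⟨⟨0, Nat.pos_of_ne_zero hk⟩⟩
  set g : (Fin 2 → ℝ) → ℝ :=
    fun γ => univ.sup' univ_nonempty (fun i => f i - dotp2 (ξ i) γ) with hgdef
  have hgiSup : ∀ γ : Fin 2 → ℝ, (⨆ i, (f i - dotp2 (ξ i) γ)) = g γ := fun γ =>
    (Finset.sup'_univ_eq_ciSup _).symm
  have hgc : Continuous g := by
    rw [continuous_iff_continuousAt]
    intro x
    exact Filter.Tendsto.finset_sup'_nhds_apply univ_nonempty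
      (fun i _ => ((continuous_const.sub (dotp2_continuous (ξ i))).tendsto x))
  obtain ⟨c, hc, hcoer⟩ := coercive_const (exists_pos_dot hne hi hii)
  have hbound : ∀ γ : Fin 2 → ℝ, univ.inf' univ_nonempty f + c * ‖γ‖ ≤ g γ := by
    intro γ
    obtain ⟨i₀, -, hi₀⟩ := Finset.exists_mem_eq_sup' univ_nonempty (fun i => dotp2 (ξ i) (-γ))
    have h1 : c * ‖γ‖ ≤ dotp2 (ξ i₀) (-γ) := by
      have h := hcoer (-γ)
      rw [hi₀] at h
      rwa [norm_neg] at h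
    have h2 : dotp2 (ξ i₀) (-γ) = -(dotp2 (ξ i₀) γ) := by simp [dotp2]; ring
    have h3 : f i₀ - dotp2 (ξ i₀) γ ≤ g γ :=
      Finset.le_sup' (fun i => f i - dotp2 (ξ i) γ) (mem_univ i₀)
    have h4 : univ.inf' univ_nonempty f ≤ f i₀ := Finset.inf'_le _ (mem_univ i₀)
    rw [h2] at h1
    linarith
  have hev : ∀ᶠ γ in Filter.cocompact (Fin 2 → ℝ), g 0 ≤ g γ := by
    have hn : Filter.Tendsto (fun γ : Fin 2 → ℝ => ‖γ‖) (Filter.cocompact _) Filter.atTop :=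
      tendsto_norm_cocompact_atTop
    filter_upwards [hn.eventually
      (Filter.eventually_ge_atTop ((g 0 - univ.inf' univ_nonempty f) / c))] with γ hγ
    have h5 := hbound γ
    rw [div_le_iff₀ hc] at hγ
    nlinarith
  obtain ⟨γ₀, hγ₀⟩ := hgc.exists_forall_le' 0 hev
  set V := g γ₀ with hVdef
  have hle : ∀ i, f i - dotp2 (ξ i) γ₀ ≤ V := fun i =>
    Finset.le_sup' (fun i => f i - dotp2 (ξ i) γ₀) (mem_univ i)
  set A : Finset (Fin k) := univ.filter (fun i => f i - dotp2 (ξ i) γ₀ = V) with hA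
  have hAmem : ∀ i, i ∈ A ↔ f i - dotp2 (ξ i) γ₀ = V := by intro i; simp [hA]
  have hAne : A.Nonempty := by
    obtain ⟨i₀, -, h⟩ := Finset.exists_mem_eq_sup' univ_nonempty
      (fun i => f i - dotp2 (ξ i) γ₀)
    exact ⟨i₀, (hAmem i₀).2 h.symm⟩
  -- the origin lies in the convex hull of the active vectors
  have hhull : (0 : Fin 2 → ℝ) ∈ convexHull ℝ (ξ '' (A : Set (Fin k))) := by
    by_contra h0
    obtain ⟨ℓ, u, hu0, hu⟩ := geometric_hahn_banach_point_closed
      (convex_convexHull ℝ _) (((A.finite_toSet.image ξ).isCompact_convexHull ℝ).isClosed) h0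
    have hu0' : (0:ℝ) < u := by simpa using hu0
    have hℓpos : ∀ i ∈ A, 0 < ℓ (ξ i) := fun i hiA =>
      lt_trans hu0' (hu _ (subset_convexHull ℝ _ ⟨i, hiA, rfl⟩))
    set d : Fin 2 → ℝ := fun j => ℓ (Pi.single j 1) with hd
    have hℓeq : ∀ x : Fin 2 → ℝ, ℓ x = dotp2 x d := by
      intro x
      have hx : x = x 0 • (Pi.single 0 1 : Fin 2 → ℝ) + x 1 • (Pi.single 1 1 : Fin 2 → ℝ) := by
        funext j; fin_cases j <;> simp [Pi.single_apply]
      conv_lhs => rw [hx]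
      rw [map_add, map_smul, map_smul]
      simp [dotp2, hd]
    set M := univ.sup' univ_nonempty (fun i => |ℓ (ξ i)|) with hM
    have habs : ∀ i, |ℓ (ξ i)| ≤ M := fun i =>
      Finset.le_sup' (fun i => |ℓ (ξ i)|) (mem_univ i)
    have hM0 : 0 ≤ M := le_trans (abs_nonneg _) (habs (Classical.arbitrary _))
    set δ := univ.inf' univ_nonempty
      (fun i => if i ∈ A then (1:ℝ) else V - (f i - dotp2 (ξ i) γ₀)) with hδ
    have hδpos : 0 < δ := by
      rw [hδ, Finset.lt_inf'_iff]
      intro i _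
      by_cases hiA : i ∈ A
      · simp [hiA]
      · simp only [hiA, if_false]
        have h6 := hle i
        have hne' : f i - dotp2 (ξ i) γ₀ ≠ V := fun h => hiA ((hAmem i).2 h)
        rcases lt_or_eq_of_le h6 with h | h
        · linarith
        · exact absurd h hne'
    have hδle : ∀ i, i ∉ A → f i - dotp2 (ξ i) γ₀ ≤ V - δ := by
      intro i hiA
      have h7 := Finset.inf'_le
        (f := fun i => if i ∈ A then (1:ℝ) else V - (f i - dotp2 (ξ i) γ₀)) (mem_univ i)
      rw [← hδ] at h7
      simp only [hiA, if_false] at h7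
      linarith
    set t := δ / (2 * (M + 1)) with ht
    have htpos : 0 < t := div_pos hδpos (by linarith)
    have hlt : univ.sup' univ_nonempty (fun i => f i - dotp2 (ξ i) (γ₀ + t • d)) < V := by
      rw [Finset.sup'_lt_iff]
      intro i _
      have hexp : dotp2 (ξ i) (γ₀ + t • d) = dotp2 (ξ i) γ₀ + t * ℓ (ξ i) := by
        rw [hℓeq (ξ i)]
        simp only [dotp2, Pi.add_apply, Pi.smul_apply, smul_eq_mul]
        ring
      rw [hexp]
      by_cases hiA : i ∈ A
      · have h1 : f i - dotp2 (ξ i) γ₀ = V := (hAmem i).1 hiA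
        have h2 := hℓpos i hiA
        nlinarith
      · have h1 := hδle i hiA
        have h2 := habs i
        have h3 : t * M < δ := by
          rw [ht, div_mul_eq_mul_div, div_lt_iff₀ (by linarith)]
          nlinarith
        have h4 : -(t * ℓ (ξ i)) ≤ t * M := by
          have h5 := neg_abs_le (ℓ (ξ i))
          nlinarith
        linarith
    have hge : V ≤ univ.sup' univ_nonempty (fun i => f i - dotp2 (ξ i) (γ₀ + t • d)) :=
      hγ₀ (γ₀ + t • d)
    linarith
  -- extract a positive triple via Carathéodory
  obtain ⟨ι, hι, z, w, hrangez, hAIz, hwpos, hwsum, hwcombo⟩ :=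
    eq_pos_convex_span_of_mem_convexHull hhull
  letI := hι
  have hwsum' : ∑ i : ι, w i = 1 := hwsum
  have hwcombo' : ∑ i : ι, w i • z i = 0 := hwcombo
  clear hwsum hwcombo
  haveI : Nonempty ι := by
    rcases isEmpty_or_nonempty ι with h | h
    · exfalso; rw [Finset.univ_eq_empty, Finset.sum_empty] at hwsum'; exact zero_ne_one hwsum'
    · exact h
  haveI : FiniteDimensional ℝ (Fin 2 → ℝ) := by infer_instance
  have hcard3 : Fintype.card ι ≤ 3 := by
    have h1 := hAIz.card_le_finrank_succ
    have h2 : Module.finrank ℝ ↥(vectorSpan ℝ (Set.range z)) ≤ Module.finrank ℝ (Fin 2 → ℝ) :=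
      Submodule.finrank_le _
    rw [Module.finrank_fin_fun] at h2
    omega
  have hcard1 : 1 ≤ Fintype.card ι := Fintype.card_pos
  have hc123 : Fintype.card ι = 1 ∨ Fintype.card ι = 2 ∨ Fintype.card ι = 3 := by omega
  -- index selection helper
  have hsel : ∀ i : ι, ∃ a : Fin k, a ∈ A ∧ ξ a = z i := by
    intro i
    obtain ⟨a, haA, haz⟩ := hrangez (Set.mem_range_self i)
    exact ⟨a, haA, haz⟩
  have hVmem : V ∈ { y : ℝ | ∃ i j m : Fin k, i < j ∧ j < m ∧
      (0 : Fin 2 → ℝ) ∈ interior (convexHull ℝ ({ξ i, ξ j, ξ m} : Set (Fin 2 → ℝ))) ∧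
      ∃ p₁ p₂ p₃ : ℝ, 0 ≤ p₁ ∧ 0 ≤ p₂ ∧ 0 ≤ p₃ ∧ p₁ + p₂ + p₃ = 1 ∧
        p₁ • ξ i + p₂ • ξ j + p₃ • ξ m = 0 ∧
        y = p₁ * f i + p₂ * f j + p₃ * f m } := by
    rcases hc123 with hcd | hcd | hcd
    · -- impossible: a single nonzero vector cannot vanish
      exfalso
      let e := Fintype.equivFinOfCardEq hcd
      have hs := Equiv.sum_comp e.symm (fun i => w i • z i)
      rw [hwcombo', Fin.sum_univ_one] at hs
      have hz0 : z (e.symm 0) = 0 := by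
        rcases smul_eq_zero.1 hs with h | h
        · exact absurd h (ne_of_gt (hwpos _))
        · exact h
      obtain ⟨a, -, haz⟩ := hsel (e.symm 0)
      exact hne a (by rw [haz, hz0])
    · -- impossible: two active vectors would be linearly dependent
      exfalso
      let e := Fintype.equivFinOfCardEq hcd
      have hs := Equiv.sum_comp e.symm (fun i => w i • z i)
      rw [hwcombo', Fin.sum_univ_two] at hs
      obtain ⟨a, -, haz⟩ := hsel (e.symm 0)
      obtain ⟨b, -, hbz⟩ := hsel (e.symm 1)
      have hab : a ≠ b := by
        intro h
        have : z (e.symm 0) = z (e.symm 1) := by rw [← haz, ← hbz, h]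
        have h01 : e.symm 0 = e.symm 1 := hAIz.injective this
        simpa using e.symm.injective h01
      rw [← haz, ← hbz] at hs
      set w0 := w (e.symm 0)
      set w1 := w (e.symm 1)
      have hw0 : 0 < w0 := hwpos _
      have h2 : ξ a = (-(w0⁻¹ * w1)) • ξ b := by
        have h1 : w0 • ξ a = -(w1 • ξ b) := eq_neg_of_add_eq_zero_left hs
        calc ξ a = w0⁻¹ • (w0 • ξ a) := by
              rw [smul_smul, inv_mul_cancel₀ hw0.ne', one_smul]
          _ = w0⁻¹ • -(w1 • ξ b) := by rw [h1]
          _ = (-(w0⁻¹ * w1)) • ξ b := by rw [smul_neg, smul_smul, neg_smul]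
      exact (linearIndependent_fin2.1 (hi a b hab)).2 _ h2.symm
    · -- the real case: three active vectors
      let e := Fintype.equivFinOfCardEq hcd
      have hs := Equiv.sum_comp e.symm (fun i => w i • z i)
      have hs1 := Equiv.sum_comp e.symm w
      rw [hwcombo', Fin.sum_univ_three] at hs
      rw [hwsum', Fin.sum_univ_three] at hs1
      obtain ⟨a, haA, haz⟩ := hsel (e.symm 0)
      obtain ⟨b, hbA, hbz⟩ := hsel (e.symm 1)
      obtain ⟨cc, hcA, hcz⟩ := hsel (e.symm 2)
      have hdist : ∀ (i j : Fin 3), i ≠ j → e.symm i ≠ e.symm j := by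
        intro i j hij h
        exact hij (e.symm.injective h)
      have hab : a ≠ b := by
        intro h; rw [h] at haz
        exact hdist 0 1 (by decide) (hAIz.injective (haz.symm.trans hbz))
      have hac : a ≠ cc := by
        intro h; rw [h] at haz
        exact hdist 0 2 (by decide) (hAIz.injective (haz.symm.trans hcz))
      have hbc : b ≠ cc := by
        intro h; rw [h] at hbz
        exact hdist 1 2 (by decide) (hAIz.injective (hbz.symm.trans hcz))
      rw [← haz, ← hbz, ← hcz] at hs
      -- the symmetric payload
      set P : Fin k → Fin k → Fin k → ℝ → ℝ → ℝ → Prop :=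
        fun x y zz p q r => (0 < p ∧ 0 < q ∧ 0 < r) ∧ p + q + r = 1 ∧
          p • ξ x + q • ξ y + r • ξ zz = 0 ∧ (x ∈ A ∧ y ∈ A ∧ zz ∈ A) with hP
      have hswap12 : ∀ x y zz p q r, P x y zz p q r → P y x zz q p r := by
        rintro x y zz p q r ⟨⟨h1, h2, h3⟩, h4, h5, h6, h7, h8⟩
        refine ⟨⟨h2, h1, h3⟩, by linarith, ?_, h7, h6, h8⟩
        rw [add_comm (q • ξ y) (p • ξ x)]; exact h5
      have hswap23 : ∀ x y zz p q r, P x y zz p q r → P x zz y p r q := by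
        rintro x y zz p q r ⟨⟨h1, h2, h3⟩, h4, h5, h6, h7, h8⟩
        refine ⟨⟨h1, h3, h2⟩, by linarith, ?_, h6, h8, h7⟩
        rw [add_right_comm]; exact h5
      have hPabc : P a b cc (w (e.symm 0)) (w (e.symm 1)) (w (e.symm 2)) :=
        ⟨⟨hwpos _, hwpos _, hwpos _⟩, hs1, hs, haA, hbA, hcA⟩
      obtain ⟨x, y, zz, hxy, hyz, p, q, r, hPfin⟩ :=
        sort3 hab hac hbc hswap12 hswap23 hPabc
      obtain ⟨⟨hp, hq, hr⟩, hsum', hcombo', hxA, hyA, hzA⟩ := hPfin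
      refine ⟨x, y, zz, hxy, hyz, ?_, p, q, r, hp.le, hq.le, hr.le, hsum', hcombo', ?_⟩
      · exact interior_triple (hne y) (hi x y (ne_of_lt hxy)) hp hq hr hsum' hcombo'
      · -- V equals the risk-neutral price
        have hdx := congrArg (fun v => dotp2 v γ₀) hcombo'
        simp only [dotp2, Pi.add_apply, Pi.smul_apply, smul_eq_mul, Pi.zero_apply] at hdx
        have hfx : f x - dotp2 (ξ x) γ₀ = V := (hAmem x).1 hxA
        have hfy : f y - dotp2 (ξ y) γ₀ = V := (hAmem y).1 hyA
        have hfz : f zz - dotp2 (ξ zz) γ₀ = V := (hAmem zz).1 hzA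
        simp only [dotp2] at hfx hfy hfz
        linear_combination (-p) * hfx - q * hfy - r * hfz - hdx - V * hsum'
  refine ⟨V, ⟨⟨γ₀, by
    show (⨆ i, (f i - dotp2 (ξ i) γ₀)) = V
    rw [hgiSup]⟩, ?_⟩, hVmem, ?_⟩
  · rintro x ⟨γ, rfl⟩
    show V ≤ ⨆ i, (f i - dotp2 (ξ i) γ)
    rw [hgiSup]
    exact hγ₀ γ
  · -- weak duality: every risk-neutral price is at most V
    rintro y ⟨i, j, m, hij, hjm, -, p₁, p₂, p₃, hp₁, hp₂, hp₃, hsum, hcombo, hy⟩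
    have hdx := congrArg (fun v => dotp2 v γ₀) hcombo
    simp only [dotp2, Pi.add_apply, Pi.smul_apply, smul_eq_mul, Pi.zero_apply] at hdx
    have h1 : f i ≤ V + dotp2 (ξ i) γ₀ := by linarith [hle i]
    have h2 : f j ≤ V + dotp2 (ξ j) γ₀ := by linarith [hle j]
    have h3 : f m ≤ V + dotp2 (ξ m) γ₀ := by linarith [hle m]
    have e1 := mul_le_mul_of_nonneg_left h1 hp₁
    have e2 := mul_le_mul_of_nonneg_left h2 hp₂
    have e3 := mul_le_mul_of_nonneg_left h3 hp₃
    simp only [dotp2] at e1 e2 e3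
    have hV1 : p₁ * V + p₂ * V + p₃ * V = V := by
      rw [← add_mul, ← add_mul, hsum, one_mul]
    nlinarith [e1, e2, e3, hdx, hV1]
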